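/- In the Bruhat–Chevalley–Renner order on R_n (generated by the two types of relations below), if y covers x, then either (type 1) y and x differ in exactly one position i with a_i < b_i, or (type 2) y is obtained from x by swapping two entries a_i < a_j (i < j) placing the larger one first; moreover the rank difference condition ℓ(y) = ℓ(x) + 1 holds. -/

import Mathlib

open Finset

variable {n : ℕ}

/-- An element of the rook monoid `R_n` in one-line notation: a sequence of
entries in `{0,...,n}` whose nonzero entries are pairwise distinct. -/
def IsRook (n : ℕ) (a : Fin n → ℕ) : Prop :=
  (∀ i, a i ≤ n) ∧ ∀ i j, a i ≠ 0 → a i = a j → i = j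

/-- number of inversions -/
def rinv (a : Fin n → ℕ) : ℕ :=
  ((univ ×ˢ univ).filter fun p : Fin n × Fin n => p.1 < p.2 ∧ a p.2 < a p.1).card

/-- number of coinversion pairs -/
def rcoinv (a : Fin n → ℕ) : ℕ :=
  ((univ ×ˢ univ).filter fun p : Fin n × Fin n => p.1 < p.2 ∧ 0 < a p.1 ∧ a p.1 < a p.2).card

/-- the length function ℓ -/
def rlen (a : Fin n → ℕ) : ℕ := (∑ i, a i) + rinv a

/-- type 1 generating relation: increase a single entry -/
def Step1 (a b : Fin n → ℕ) : Prop := ∃ i, a i < b i ∧ ∀ j, j ≠ i → a j = b j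

/-- type 2 generating relation: swap two entries, larger one first -/
def Step2 (a b : Fin n → ℕ) : Prop :=
  ∃ i j, i < j ∧ a i < a j ∧ b i = a j ∧ b j = a i ∧ ∀ k, k ≠ i → k ≠ j → a k = b k

/-- the Bruhat-Chevalley-Renner order on `R_n` -/
def RookLe (n : ℕ) (a b : Fin n → ℕ) : Prop :=
  Relation.ReflTransGen (fun x y => IsRook n x ∧ IsRook n y ∧ (Step1 x y ∨ Step2 x y)) a b

def RookLt (n : ℕ) (a b : Fin n → ℕ) : Prop := RookLe n a b ∧ a ≠ b

/-- covering relation of the Bruhat-Chevalley-Renner order -/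
def RookCov (n : ℕ) (a b : Fin n → ℕ) : Prop :=
  RookLt n a b ∧ ∀ z, RookLt n a z → RookLt n z b → False

/-- the edge labeling `F` on covering relations -/
noncomputable def Flabel (a b : Fin n → ℕ) : ℕ × ℕ := by
  classical
  exact if h : ∃ i, a i < b i ∧ ∀ j, j ≠ i → a j = b j then (a h.choose, b h.choose)
  else if h2 : ∃ p : Fin n × Fin n, p.1 < p.2 ∧ a p.1 < a p.2 ∧ b p.1 = a p.2 ∧ b p.2 = a p.1 ∧
      ∀ k, k ≠ p.1 → k ≠ p.2 → a k = b k then (a h2.choose.1, a h2.choose.2)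
  else (0, 0)

/-- lexicographic (strict) order on labels -/
def pairLt (p q : ℕ × ℕ) : Prop := p.1 < q.1 ∨ (p.1 = q.1 ∧ p.2 < q.2)

def pairLe (p q : ℕ × ℕ) : Prop := p = q ∨ pairLt p q

/-- lexicographic comparison of label sequences -/
def lexLe (l m : List (ℕ × ℕ)) : Prop := l = m ∨ List.Lex pairLt l m

/-- the Jordan-Hölder sequence of labels of a chain -/
noncomputable def labels (c : List (Fin n → ℕ)) : List (ℕ × ℕ) :=
  List.zipWith Flabel c c.tail

/-- a maximal chain in the interval `[x,y]` -/
def RookMaxChain (n : ℕ) (x y : Fin n → ℕ) (c : List (Fin n → ℕ)) : Prop :=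
  c.Chain' (RookCov n) ∧ c.head? = some x ∧ c.getLast? = some y

namespace RookAux

def invSet (a : Fin n → ℕ) : Finset (Fin n × Fin n) :=
  (univ ×ˢ univ).filter fun p : Fin n × Fin n => p.1 < p.2 ∧ a p.2 < a p.1

lemma mem_invSet {a : Fin n → ℕ} {p : Fin n × Fin n} :
    p ∈ invSet a ↔ p.1 < p.2 ∧ a p.2 < a p.1 := by
  simp [invSet]

lemma rinv_eq_card (a : Fin n → ℕ) : rinv a = (invSet a).card := rfl

lemma sum_off_eq {a b : Fin n → ℕ} {i : Fin n} (hoff : ∀ j, j ≠ i → a j = b j) :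
    (∑ k, b k) + a i = (∑ k, a k) + b i := by
  rw [← Finset.sum_erase_add univ b (mem_univ i), ← Finset.sum_erase_add univ a (mem_univ i)]
  have h : ∑ k ∈ univ.erase i, b k = ∑ k ∈ univ.erase i, a k :=
    Finset.sum_congr rfl fun k hk => (hoff k (Finset.ne_of_mem_erase hk)).symm
  rw [h]; ring

/-- the set of inversion pairs destroyed by raising entry `i` -/
def stepT (a b : Fin n → ℕ) (i : Fin n) : Finset (Fin n × Fin n) :=
  (univ ×ˢ univ).filter fun p : Fin n × Fin n =>
    p.2 = i ∧ p.1 < i ∧ a i < a p.1 ∧ a p.1 < b i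

lemma mem_stepT {a b : Fin n → ℕ} {i : Fin n} {p : Fin n × Fin n} :
    p ∈ stepT a b i ↔ p.2 = i ∧ p.1 < i ∧ a i < a p.1 ∧ a p.1 < b i := by
  simp [stepT]

lemma step1_inv_subset {a b : Fin n → ℕ} {i : Fin n}
    (hoff : ∀ j, j ≠ i → a j = b j) (hw : ∀ k, k ≠ i → a k ≠ b i)
    (hab : a i < b i) :
    invSet a ⊆ invSet b ∪ stepT a b i := by
  rintro ⟨p, q⟩ hp
  rw [mem_invSet] at hp
  obtain ⟨hpq, hv⟩ := hp
  simp only [mem_union, mem_invSet, mem_stepT]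
  by_cases hq : q = i
  · subst hq
    have hpi : p ≠ q := ne_of_lt hpq
    have hbp : b p = a p := (hoff p hpi).symm
    have hne := hw p hpi
    by_cases h2 : b q < a p
    · exact Or.inl ⟨hpq, by rw [hbp]; exact h2⟩
    · exact Or.inr ⟨rfl, hpq, hv, by omega⟩
  · left
    have hbq : b q = a q := (hoff q hq).symm
    by_cases hp1 : p = i
    · subst hp1
      exact ⟨hpq, by rw [hbq]; exact hv.trans hab⟩
    · have hbp : b p = a p := (hoff p hp1).symm
      exact ⟨hpq, by rw [hbq, hbp]; exact hv⟩

lemma stepT_card_le {a b : Fin n → ℕ} {i : Fin n} (ha : IsRook n a) :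
    (stepT a b i).card ≤ b i - a i - 1 := by
  have h : (stepT a b i).card ≤ (Finset.Ioo (a i) (b i)).card := by
    apply Finset.card_le_card_of_injOn (fun p => a p.1)
    · intro p hp
      rw [Finset.mem_coe, mem_stepT] at hp
      exact Finset.mem_Ioo.mpr ⟨hp.2.2.1, hp.2.2.2⟩
    · intro p hp q hq hpq
      rw [Finset.mem_coe, mem_stepT] at hp hq
      have h0 : a p.1 ≠ 0 := by omega
      have h1 : p.1 = q.1 := ha.2 _ _ h0 hpq
      have h2 : p.2 = q.2 := hp.1.trans hq.1.symm
      exact Prod.ext h1 h2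
  simpa [Nat.card_Ioo] using h

lemma stepT_card_eq {a b : Fin n → ℕ} {i : Fin n} (ha : IsRook n a)
    (hall : ∀ t, a i < t → t < b i → ∃ p, p < i ∧ a p = t) :
    (stepT a b i).card = b i - a i - 1 := by
  have h : (stepT a b i).card = (Finset.Ioo (a i) (b i)).card := by
    apply Finset.card_bij (fun p _ => a p.1)
    · intro p hp
      rw [mem_stepT] at hp
      exact Finset.mem_Ioo.mpr ⟨hp.2.2.1, hp.2.2.2⟩
    · intro p hp q hq hpq
      rw [mem_stepT] at hp hq
      have h0 : a p.1 ≠ 0 := by omega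
      have h1 : p.1 = q.1 := ha.2 _ _ h0 hpq
      exact Prod.ext h1 (hp.1.trans hq.1.symm)
    · intro t ht
      rw [Finset.mem_Ioo] at ht
      obtain ⟨p, hpi, hap⟩ := hall t ht.1 ht.2
      exact ⟨(p, i), mem_stepT.mpr ⟨rfl, hpi, show a i < a p by omega, show a p < b i by omega⟩, hap⟩
  rw [h, Nat.card_Ioo]

lemma step1_inv_superset {a b : Fin n → ℕ} {i : Fin n}
    (hoff : ∀ j, j ≠ i → a j = b j) (hab : a i < b i)
    (hnA : ∀ j, i < j → ¬(a i ≤ a j ∧ a j < b i)) :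
    invSet b ∪ stepT a b i ⊆ invSet a := by
  intro p hp
  rw [mem_union] at hp
  rcases hp with hp | hp
  · obtain ⟨q, r⟩ := p
    rw [mem_invSet] at hp ⊢
    dsimp only at hp ⊢
    obtain ⟨hqr, hv⟩ := hp
    refine ⟨hqr, ?_⟩
    by_cases hr : r = i
    · subst hr
      have hq : q ≠ r := ne_of_lt hqr
      have := hoff q hq
      omega
    · by_cases hq : q = i
      · subst hq
        have := hoff r hr
        have := hnA r hqr
        omega
      · have := hoff q hq
        have := hoff r hr
        omega
  · rw [mem_stepT] at hp
    obtain ⟨h2, h1, hv, _⟩ := hp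
    rw [mem_invSet, h2]
    exact ⟨h1, hv⟩

lemma step1_disjoint {a b : Fin n → ℕ} {i : Fin n}
    (hoff : ∀ j, j ≠ i → a j = b j) :
    Disjoint (invSet b) (stepT a b i) := by
  rw [Finset.disjoint_left]
  intro p hpb hpt
  rw [mem_invSet] at hpb
  rw [mem_stepT] at hpt
  obtain ⟨h2, h1, hv, hw⟩ := hpt
  rw [h2] at hpb
  have hne : p.1 ≠ i := ne_of_lt h1
  have := hoff p.1 hne
  omega

lemma step1_rinv_eq {a b : Fin n → ℕ} {i : Fin n} (ha : IsRook n a)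
    (hoff : ∀ j, j ≠ i → a j = b j) (hw : ∀ k, k ≠ i → a k ≠ b i) (hab : a i < b i)
    (hall : ∀ t, a i < t → t < b i → ∃ p, p < i ∧ a p = t)
    (hnA : ∀ j, i < j → ¬(a i ≤ a j ∧ a j < b i)) :
    rinv a = rinv b + (b i - a i - 1) := by
  have hset : invSet a = invSet b ∪ stepT a b i :=
    Finset.Subset.antisymm (step1_inv_subset hoff hw hab) (step1_inv_superset hoff hab hnA)
  rw [rinv_eq_card, rinv_eq_card, hset, Finset.card_union_of_disjoint (step1_disjoint hoff),
    stepT_card_eq ha hall]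

lemma step1_rinv_le {a b : Fin n → ℕ} {i : Fin n} (ha : IsRook n a)
    (hoff : ∀ j, j ≠ i → a j = b j) (hw : ∀ k, k ≠ i → a k ≠ b i) (hab : a i < b i) :
    rinv a ≤ rinv b + (b i - a i - 1) := by
  calc rinv a ≤ (invSet b ∪ stepT a b i).card :=
        Finset.card_le_card (step1_inv_subset hoff hw hab)
    _ ≤ (invSet b).card + (stepT a b i).card := Finset.card_union_le _ _
    _ ≤ rinv b + (b i - a i - 1) := by
        rw [rinv_eq_card]
        exact Nat.add_le_add_left (stepT_card_le ha) _

lemma step1_hw {a b : Fin n → ℕ} {i : Fin n} (hb : IsRook n b)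
    (hoff : ∀ j, j ≠ i → a j = b j) (hab : a i < b i) :
    ∀ k, k ≠ i → a k ≠ b i := by
  intro k hk hak
  have hbk : b k = b i := by rw [← hoff k hk, hak]
  have h0 : b k ≠ 0 := by omega
  exact hk (hb.2 k i h0 hbk)

lemma step1_rlen_lt {a b : Fin n → ℕ} {i : Fin n} (ha : IsRook n a) (hb : IsRook n b)
    (hab : a i < b i) (hoff : ∀ j, j ≠ i → a j = b j) : rlen a < rlen b := by
  have h1 := step1_rinv_le ha hoff (step1_hw hb hoff hab) hab
  have h2 := sum_off_eq hoff
  unfold rlen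
  omega

lemma step1_rlen_eq {a b : Fin n → ℕ} {i : Fin n} (ha : IsRook n a) (hb : IsRook n b)
    (hab : a i < b i) (hoff : ∀ j, j ≠ i → a j = b j)
    (hall : ∀ t, a i < t → t < b i → ∃ p, p < i ∧ a p = t)
    (hnA : ∀ j, i < j → ¬(a i ≤ a j ∧ a j < b i)) :
    rlen b = rlen a + 1 := by
  have h1 := step1_rinv_eq ha hoff (step1_hw hb hoff hab) hab hall hnA
  have h2 := sum_off_eq hoff
  unfold rlen
  omega

def gswap (i j : Fin n) (p : Fin n × Fin n) : Fin n × Fin n :=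
  if p.1 = i ∧ j < p.2 then (j, p.2)
  else if p.1 = j then (i, p.2)
  else if p.2 = i then (p.1, j)
  else if p.2 = j ∧ p.1 < i then (p.1, i)
  else p
lemma gswap_gswap {i j : Fin n} (hij : i < j) (p : Fin n × Fin n) (h : p.1 < p.2) :
    gswap i j (gswap i j p) = p := by
  obtain ⟨q, r⟩ := p
  dsimp only at h
  unfold gswap
  split_ifs <;> simp_all <;> omega

section step2
variable {a b : Fin n → ℕ} {i j : Fin n}

lemma gswap_mem_b (hij : i < j) (hvu : a i < a j) (hbi : b i = a j) (hbj : b j = a i)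
    (hoff : ∀ k, k ≠ i → k ≠ j → a k = b k) :
    ∀ p ∈ invSet a, gswap i j p ∈ invSet b := by
  rintro ⟨q, r⟩ hp
  rw [mem_invSet] at hp
  dsimp only at hp
  obtain ⟨hqr, hv⟩ := hp
  rw [mem_invSet]
  unfold gswap
  dsimp only
  split_ifs with h1 h2 h3 h4 <;> dsimp only
  · -- q = i, j < r ↦ (j, r)
    obtain ⟨hq, hr⟩ := h1
    have har : a r = b r := hoff r (by omega) (by omega)
    subst hq
    refine ⟨hr, ?_⟩
    omega
  · -- q = j ↦ (i, r)
    have hr : j < r := by omega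
    have har : a r = b r := hoff r (by omega) (by omega)
    subst h2
    exact ⟨hij.trans hqr, by omega⟩
  · -- r = i ↦ (q, j)
    have haq : a q = b q := hoff q (by omega) (by omega)
    subst h3
    exact ⟨hqr.trans hij, by omega⟩
  · -- r = j, q < i ↦ (q, i)
    obtain ⟨hr, hq⟩ := h4
    have haq : a q = b q := hoff q (by omega) (by omega)
    subst hr
    exact ⟨hq, by omega⟩
  · -- fixed
    refine ⟨hqr, ?_⟩
    by_cases hq : q = i
    · subst hq
      have hrj : r ≠ j := by intro h; subst h; omega
      have har : a r = b r := hoff r (by omega) hrj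
      omega
    · by_cases hr : r = j
      · have harj : a r = a j := by rw [hr]
        have hbrj : b r = b j := by rw [hr]
        have hqj : q ≠ j := by omega
        have haq : a q = b q := hoff q hq hqj
        omega
      · have hqj : q ≠ j := h2
        have hri : r ≠ i := h3
        have haq : a q = b q := hoff q hq hqj
        have har : a r = b r := hoff r hri hr
        omega

lemma gswap_mem_a (hij : i < j) (hvu : a i < a j) (hbi : b i = a j) (hbj : b j = a i)
    (hoff : ∀ k, k ≠ i → k ≠ j → a k = b k) (ha : IsRook n a)
    (hC : ∀ k, i < k → k < j → ¬(a i ≤ a k ∧ a k < a j)) :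
    ∀ p ∈ invSet b, p ≠ (i, j) → gswap i j p ∈ invSet a := by
  rintro ⟨q, r⟩ hp hne
  rw [mem_invSet] at hp
  dsimp only at hp
  obtain ⟨hqr, hv⟩ := hp
  rw [mem_invSet]
  unfold gswap
  dsimp only
  split_ifs with h1 h2 h3 h4 <;> dsimp only
  · obtain ⟨hq, hr⟩ := h1
    have har : a r = b r := hoff r (by omega) (by omega)
    subst hq
    exact ⟨hr, by omega⟩
  · have hr : j < r := by omega
    have har : a r = b r := hoff r (by omega) (by omega)
    subst h2
    exact ⟨hij.trans hqr, by omega⟩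
  · have haq : a q = b q := hoff q (by omega) (by omega)
    subst h3
    exact ⟨hqr.trans hij, by omega⟩
  · obtain ⟨hr, hq⟩ := h4
    have haq : a q = b q := hoff q (by omega) (by omega)
    subst hr
    exact ⟨hq, by omega⟩
  · refine ⟨hqr, ?_⟩
    by_cases hq : q = i
    · have haqi : a q = a i := by rw [hq]
      have hbqi : b q = b i := by rw [hq]
      have hrj : r ≠ j := by intro h; exact hne (by rw [hq, h])
      have hri : r ≠ i := by omega
      have hnjr : ¬ (j < r) := fun hh => h1 ⟨hq, hh⟩
      have hrltj : r < j := by omega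
      have hilr : i < r := by omega
      have har : a r = b r := hoff r hri hrj
      have := hC r hilr hrltj
      omega
    · by_cases hr : r = j
      · have harj : a r = a j := by rw [hr]
        have hbrj : b r = b j := by rw [hr]
        have hqj : q ≠ j := by omega
        have hnqi : ¬ (q < i) := fun hh => h4 ⟨hr, hh⟩
        have hqgti : i < q := by omega
        have haq : a q = b q := hoff q hq hqj
        have h5 := hC q hqgti (by omega : q < j)
        have h6 : a q ≠ a j := fun h => hqj (ha.2 q j (by omega) h)
        omega
      · have haq : a q = b q := hoff q hq h2
        have har : a r = b r := hoff r h3 hr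
        omega
lemma gswap_fix (hij : i < j) : gswap i j (i, j) = (i, j) := by
  unfold gswap
  dsimp only
  rw [if_neg (by omega), if_neg (by omega), if_neg (by omega), if_neg (by omega)]

lemma ij_mem_b (hij : i < j) (hvu : a i < a j) (hbi : b i = a j) (hbj : b j = a i) :
    (i, j) ∈ invSet b := mem_invSet.mpr ⟨hij, by dsimp only; omega⟩

lemma ij_notmem_a (hvu : a i < a j) : (i, j) ∉ invSet a := by
  rw [mem_invSet]
  dsimp only
  omega

lemma gswap_injOn (hij : i < j) :
    Set.InjOn (gswap i j) (invSet a) := by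
  intro p hp q hq h
  have hp' := (mem_invSet.mp (Finset.mem_coe.mp hp)).1
  have hq' := (mem_invSet.mp (Finset.mem_coe.mp hq)).1
  rw [← gswap_gswap hij p hp', h, gswap_gswap hij q hq']

lemma ij_notmem_image (hij : i < j) (hvu : a i < a j) :
    (i, j) ∉ (invSet a).image (gswap i j) := by
  rw [Finset.mem_image]
  rintro ⟨p, hp, hgp⟩
  have hp' := (mem_invSet.mp hp).1
  have : p = (i, j) := by rw [← gswap_gswap hij p hp', hgp, gswap_fix hij]
  rw [this] at hp
  exact ij_notmem_a hvu hp

lemma step2_rinv_le (hij : i < j) (hvu : a i < a j) (hbi : b i = a j) (hbj : b j = a i)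
    (hoff : ∀ k, k ≠ i → k ≠ j → a k = b k) :
    rinv a + 1 ≤ rinv b := by
  have hsub : insert (i, j) ((invSet a).image (gswap i j)) ⊆ invSet b := by
    intro p hp
    rcases Finset.mem_insert.mp hp with rfl | hp
    · exact ij_mem_b hij hvu hbi hbj
    · obtain ⟨q, hq, rfl⟩ := Finset.mem_image.mp hp
      exact gswap_mem_b hij hvu hbi hbj hoff q hq
  have h1 := Finset.card_le_card hsub
  rw [Finset.card_insert_of_notMem (ij_notmem_image hij hvu),
    Finset.card_image_of_injOn (gswap_injOn hij)] at h1
  rw [rinv_eq_card, rinv_eq_card]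
  omega

lemma step2_rinv_eq (hij : i < j) (hvu : a i < a j) (hbi : b i = a j) (hbj : b j = a i)
    (hoff : ∀ k, k ≠ i → k ≠ j → a k = b k) (ha : IsRook n a)
    (hC : ∀ k, i < k → k < j → ¬(a i ≤ a k ∧ a k < a j)) :
    rinv b = rinv a + 1 := by
  have hset : invSet b = insert (i, j) ((invSet a).image (gswap i j)) := by
    apply Finset.Subset.antisymm
    · intro p hp
      by_cases hne : p = (i, j)
      · exact Finset.mem_insert.mpr (Or.inl hne)
      · refine Finset.mem_insert.mpr (Or.inr (Finset.mem_image.mpr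
          ⟨gswap i j p, gswap_mem_a hij hvu hbi hbj hoff ha hC p hp hne, ?_⟩))
        exact gswap_gswap hij p (mem_invSet.mp hp).1
    · intro p hp
      rcases Finset.mem_insert.mp hp with rfl | hp
      · exact ij_mem_b hij hvu hbi hbj
      · obtain ⟨q, hq, rfl⟩ := Finset.mem_image.mp hp
        exact gswap_mem_b hij hvu hbi hbj hoff q hq
  rw [rinv_eq_card, rinv_eq_card, hset,
    Finset.card_insert_of_notMem (ij_notmem_image hij hvu),
    Finset.card_image_of_injOn (gswap_injOn hij)]

lemma sum_swap_eq (hij : i < j) (hbi : b i = a j) (hbj : b j = a i)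
    (hoff : ∀ k, k ≠ i → k ≠ j → a k = b k) :
    (∑ k, b k) = ∑ k, a k := by
  have h : ∀ k, b k = a (Equiv.swap i j k) := by
    intro k
    by_cases hk : k = i
    · subst hk; rw [Equiv.swap_apply_left]; exact hbi
    · by_cases hk' : k = j
      · subst hk'; rw [Equiv.swap_apply_right]; exact hbj
      · rw [Equiv.swap_apply_of_ne_of_ne hk hk']; exact (hoff k hk hk').symm
  rw [Finset.sum_congr rfl fun k _ => h k]
  exact Equiv.sum_comp (Equiv.swap i j) a

end step2

section helpers
variable {a b : Fin n → ℕ} {i j : Fin n}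

def swapFun (a : Fin n → ℕ) (i j : Fin n) : Fin n → ℕ := fun k => a (Equiv.swap i j k)

lemma swapFun_left : swapFun a i j i = a j := by simp [swapFun]

lemma swapFun_right : swapFun a i j j = a i := by simp [swapFun]

lemma swapFun_other {k : Fin n} (hk : k ≠ i) (hk' : k ≠ j) : swapFun a i j k = a k := by
  simp [swapFun, Equiv.swap_apply_of_ne_of_ne hk hk']

lemma isRook_swapFun (ha : IsRook n a) : IsRook n (swapFun a i j) := by
  constructor
  · intro k; exact ha.1 _
  · intro k l h0 heq
    exact (Equiv.swap i j).injective (ha.2 _ _ h0 heq)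

lemma isRook_update (ha : IsRook n a) {t : ℕ} (htn : t ≤ n) (hun : ∀ k, a k ≠ t) :
    IsRook n (Function.update a i t) := by
  constructor
  · intro k
    by_cases hk : k = i
    · rw [hk, Function.update_self]; exact htn
    · rw [Function.update_of_ne hk]; exact ha.1 k
  · intro k l h0 heq
    by_cases hk : k = i <;> by_cases hl : l = i
    · rw [hk, hl]
    · rw [hk, Function.update_self] at heq
      rw [Function.update_of_ne hl] at heq
      exact absurd heq.symm (hun l)
    · rw [hl, Function.update_self] at heq
      rw [Function.update_of_ne hk] at heq
      exact absurd heq (hun k)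
    · rw [Function.update_of_ne hk] at heq h0
      rw [Function.update_of_ne hl] at heq
      exact ha.2 k l h0 heq

lemma step_rlen_lt (ha : IsRook n a) (hb : IsRook n b)
    (h : Step1 a b ∨ Step2 a b) : rlen a < rlen b := by
  rcases h with ⟨i, hab, hoff⟩ | ⟨i, j, hij, hvu, hbi, hbj, hoff⟩
  · exact step1_rlen_lt ha hb hab hoff
  · have h1 := step2_rinv_le hij hvu hbi hbj hoff
    have h2 := sum_swap_eq hij hbi hbj hoff
    unfold rlen
    omega

lemma rlt_single (ha : IsRook n a) (hb : IsRook n b) (h : Step1 a b ∨ Step2 a b) :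
    RookLt n a b :=
  ⟨Relation.ReflTransGen.single ⟨ha, hb, h⟩,
    fun he => (step_rlen_lt ha hb h).ne (congrArg rlen he)⟩

lemma rlt_two {z : Fin n → ℕ} (ha : IsRook n a) (hz : IsRook n z) (hb : IsRook n b)
    (h1 : Step1 a z ∨ Step2 a z) (h2 : Step1 z b ∨ Step2 z b) : RookLt n a b := by
  refine ⟨Relation.ReflTransGen.head ⟨ha, hz, h1⟩
    (Relation.ReflTransGen.single ⟨hz, hb, h2⟩), fun he => ?_⟩
  have l1 := step_rlen_lt ha hz h1
  have l2 := step_rlen_lt hz hb h2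
  rw [he] at l1
  omega

end helpers

end RookAux

theorem cover_is_type1_or_type2 (n : ℕ) (a b : Fin n → ℕ)
    (ha : IsRook n a) (hb : IsRook n b) (h : RookCov n a b) :
    (Step1 a b ∨ Step2 a b) ∧ rlen b = rlen a + 1 := by
  classical
  obtain ⟨⟨hle, hne⟩, hcov⟩ := h
  have hstep : Step1 a b ∨ Step2 a b := by
    rcases Relation.ReflTransGen.cases_head hle with heq | ⟨c, hac, hcb⟩
    · exact absurd heq hne
    · rcases eq_or_ne c b with rfl | hcb'
      · exact hac.2.2
      · exact absurd (⟨hcb, hcb'⟩ : RookLt n c b)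
          (fun hlt => hcov c ⟨Relation.ReflTransGen.single hac,
            fun he => (RookAux.step_rlen_lt hac.1 hac.2.1 hac.2.2).ne (congrArg rlen he)⟩ hlt)
  refine ⟨hstep, ?_⟩
  rcases hstep with ⟨i, hab, hoff⟩ | ⟨i, j, hij, hvu, hbi, hbj, hoff⟩
  · -- Step1
    have hwg : ∀ p, a p ≠ b i := by
      intro p
      by_cases hp : p = i
      · rw [hp]; omega
      · exact RookAux.step1_hw hb hoff hab p hp
    by_cases hA : ∃ k, i < k ∧ a i ≤ a k ∧ a k < b i
    · exfalso
      obtain ⟨k, hik, h1, h2⟩ := hA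
      have hki : k ≠ i := ne_of_gt hik
      by_cases hk : a i < a k
      · -- three-step refinement via swap
        set z1 := RookAux.swapFun a i k with hz1def
        have hz1 : IsRook n z1 := RookAux.isRook_swapFun ha
        have hz1i : z1 i = a k := RookAux.swapFun_left
        have hz1k : z1 k = a i := RookAux.swapFun_right
        have hz1o : ∀ m, m ≠ i → m ≠ k → z1 m = a m := fun m hm hm' =>
          RookAux.swapFun_other hm hm'
        have s1 : Step2 a z1 := ⟨i, k, hik, hk, hz1i, hz1k,
          fun m hm hm' => (hz1o m hm hm').symm⟩
        set z2 := Function.update z1 i (b i) with hz2def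
        have hz2 : IsRook n z2 := RookAux.isRook_update hz1 (hb.1 i)
          (fun m => by
            by_cases hm : m = i
            · rw [hm, hz1i]; exact hwg k
            · by_cases hm' : m = k
              · rw [hm', hz1k]; exact hwg i
              · rw [hz1o m hm hm']; exact hwg m)
        have hz2i : z2 i = b i := Function.update_self _ _ _
        have hz2o : ∀ m, m ≠ i → z2 m = z1 m := fun m hm => Function.update_of_ne hm _ _
        have s2 : Step1 z1 z2 := ⟨i, by rw [hz1i, hz2i]; exact h2,
          fun m hm => (hz2o m hm).symm⟩
        have s3 : Step1 z2 b := by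
          refine ⟨k, ?_, ?_⟩
          · rw [hz2o k hki, hz1k, ← hoff k hki]; exact hk
          · intro m hm
            by_cases hm' : m = i
            · rw [hm', hz2i]
            · rw [hz2o m hm', hz1o m hm' hm, hoff m hm']
        exact hcov z1 (RookAux.rlt_single ha hz1 (Or.inr s1))
          (RookAux.rlt_two hz1 hz2 hb (Or.inl s2) (Or.inl s3))
      · -- a k = a i
        have heq : a k = a i := by omega
        set z1 := Function.update a k (b i) with hz1def
        have hz1 : IsRook n z1 := RookAux.isRook_update ha (hb.1 i) hwg
        have hz1k : z1 k = b i := Function.update_self _ _ _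
        have hz1o : ∀ m, m ≠ k → z1 m = a m := fun m hm => Function.update_of_ne hm _ _
        have s1 : Step1 a z1 := ⟨k, by rw [hz1k]; exact h2,
          fun m hm => (hz1o m hm).symm⟩
        have s2 : Step2 z1 b := by
          refine ⟨i, k, hik, ?_, ?_, ?_, ?_⟩
          · rw [hz1o i hki.symm, hz1k]; exact hab
          · rw [hz1k]
          · rw [hz1o i hki.symm, ← hoff k hki]; exact heq
          · intro m hm hm'
            rw [hz1o m hm', hoff m hm]
        exact hcov z1 (RookAux.rlt_single ha hz1 (Or.inl s1))
          (RookAux.rlt_single hz1 hb (Or.inr s2))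
    · by_cases hall : ∀ t, a i < t → t < b i → ∃ p, p < i ∧ a p = t
      · exact RookAux.step1_rlen_eq ha hb hab hoff hall
          (fun k hk hcon => hA ⟨k, hk, hcon.1, hcon.2⟩)
      · exfalso
        push_neg at hall
        obtain ⟨t, ht1, ht2, ht3⟩ := hall
        have hun : ∀ p, a p ≠ t := by
          intro p hp
          rcases lt_trichotomy p i with hpi | hpi | hpi
          · exact ht3 p hpi hp
          · rw [hpi] at hp; omega
          · exact hA ⟨p, hpi, by omega⟩
        set z := Function.update a i t with hzdef
        have hz : IsRook n z := RookAux.isRook_update ha (by have := hb.1 i; omega) hun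
        have hzi : z i = t := Function.update_self _ _ _
        have hzo : ∀ m, m ≠ i → z m = a m := fun m hm => Function.update_of_ne hm _ _
        have s1 : Step1 a z := ⟨i, by rw [hzi]; exact ht1, fun m hm => (hzo m hm).symm⟩
        have s2 : Step1 z b := ⟨i, by rw [hzi]; exact ht2,
          fun m hm => by rw [hzo m hm, hoff m hm]⟩
        exact hcov z (RookAux.rlt_single ha hz (Or.inl s1))
          (RookAux.rlt_single hz hb (Or.inl s2))
  · -- Step2
    by_cases hmid : ∃ k, i < k ∧ k < j ∧ a i ≤ a k ∧ a k < a j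
    · exfalso
      obtain ⟨k, hik, hkj, h1, h2⟩ := hmid
      have hki : k ≠ i := ne_of_gt hik
      have hkj' : k ≠ j := ne_of_lt hkj
      have hji : j ≠ i := ne_of_gt (hik.trans hkj)
      by_cases hk : a i < a k
      · -- a i < a k < a j : three swaps
        set z1 := RookAux.swapFun a i k with hz1def
        have hz1 : IsRook n z1 := RookAux.isRook_swapFun ha
        have hz1i : z1 i = a k := RookAux.swapFun_left
        have hz1k : z1 k = a i := RookAux.swapFun_right
        have hz1o : ∀ m, m ≠ i → m ≠ k → z1 m = a m := fun m hm hm' =>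
          RookAux.swapFun_other hm hm'
        have s1 : Step2 a z1 := ⟨i, k, hik, hk, hz1i, hz1k,
          fun m hm hm' => (hz1o m hm hm').symm⟩
        set z2 := RookAux.swapFun z1 k j with hz2def
        have hz2 : IsRook n z2 := RookAux.isRook_swapFun hz1
        have hz2k : z2 k = z1 j := RookAux.swapFun_left
        have hz2j : z2 j = z1 k := RookAux.swapFun_right
        have hz2o : ∀ m, m ≠ k → m ≠ j → z2 m = z1 m := fun m hm hm' =>
          RookAux.swapFun_other hm hm'
        have hz1j : z1 j = a j := hz1o j hji hkj'.symm
        have s2 : Step2 z1 z2 := by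
          refine ⟨k, j, hkj, ?_, hz2k, hz2j, fun m hm hm' => (hz2o m hm hm').symm⟩
          rw [hz1k, hz1j]; exact hvu
        have s3 : Step2 z2 b := by
          refine ⟨i, k, hik, ?_, ?_, ?_, ?_⟩
          · rw [hz2o i hki.symm hji.symm, hz1i, hz2k, hz1j]; exact h2
          · rw [hbi, hz2k, hz1j]
          · rw [hz2o i hki.symm hji.symm, hz1i, ← hoff k hki hkj']
          · intro m hm hm'
            by_cases hmj : m = j
            · rw [hmj, hz2j, hz1k, hbj]
            · rw [hz2o m hm' hmj, hz1o m hm hm', hoff m hm hmj]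
        exact hcov z1 (RookAux.rlt_single ha hz1 (Or.inr s1))
          (RookAux.rlt_two hz1 hz2 hb (Or.inr s2) (Or.inr s3))
      · -- a k = a i
        have heq : a k = a i := by omega
        set z1 := RookAux.swapFun a k j with hz1def
        have hz1 : IsRook n z1 := RookAux.isRook_swapFun ha
        have hz1k : z1 k = a j := RookAux.swapFun_left
        have hz1j : z1 j = a k := RookAux.swapFun_right
        have hz1o : ∀ m, m ≠ k → m ≠ j → z1 m = a m := fun m hm hm' =>
          RookAux.swapFun_other hm hm'
        have s1 : Step2 a z1 := ⟨k, j, hkj, by omega, hz1k, hz1j,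
          fun m hm hm' => (hz1o m hm hm').symm⟩
        have s2 : Step2 z1 b := by
          refine ⟨i, k, hik, ?_, ?_, ?_, ?_⟩
          · rw [hz1o i hki.symm hji.symm, hz1k]; exact hvu
          · rw [hbi, hz1k]
          · rw [hz1o i hki.symm hji.symm, ← hoff k hki hkj']; exact heq
          · intro m hm hm'
            by_cases hmj : m = j
            · rw [hmj, hz1j, hbj]; exact heq
            · rw [hz1o m hm' hmj, hoff m hm hmj]
        exact hcov z1 (RookAux.rlt_single ha hz1 (Or.inr s1))
          (RookAux.rlt_single hz1 hb (Or.inr s2))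
    · have hC : ∀ k, i < k → k < j → ¬(a i ≤ a k ∧ a k < a j) :=
        fun k hk hk' hcon => hmid ⟨k, hk, hk', hcon.1, hcon.2⟩
      have h1 := RookAux.step2_rinv_eq hij hvu hbi hbj hoff ha hC
      have h2 := RookAux.sum_swap_eq hij hbi hbj hoff
      unfold rlen
      omega
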